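/- (Integrity of Bracha Broadcast.) Under the Bracha Broadcast hypotheses, for every p ∈ P and v ∈ Val: if deliver p v = T then Someone broadcastᵥ ≥ B. -/

import Mathlib

/-- The three truth values, encoded as `Fin 3` with `0 = F`, `1 = B`, `2 = T`. -/
abbrev TV : Type := Fin 3

/-- false -/ def tF : TV := 0
/-- both/byzantine -/ def tB : TV := 1
/-- true -/ def tT : TV := 2

/-- Negation on `TV`: `neg F = T`, `neg B = B`, `neg T = F`. -/
def tneg (x : TV) : TV := ⟨2 - x.val, by omega⟩

/-- A semitopology: a collection of subsets containing the whole set and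
closed under arbitrary unions. -/
structure Semitopology (P : Type*) where
  opens : Set (Set P)
  univ_mem : Set.univ ∈ opens
  sUnion_mem : ∀ S : Set (Set P), S ⊆ opens → ⋃₀ S ∈ opens

namespace Semitopology

variable {P : Type*}

noncomputable def Everyone (f : P → TV) : TV := ⨅ p, f p

noncomputable def Someone (f : P → TV) : TV := ⨆ p, f p

noncomputable def Quorum (S : Semitopology P) (f : P → TV) : TV :=
  ⨆ O ∈ {O | O ∈ S.opens ∧ O.Nonempty}, ⨅ p ∈ O, f p

noncomputable def Contraquorum (S : Semitopology P) (f : P → TV) : TV :=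
  ⨅ O ∈ {O | O ∈ S.opens ∧ O.Nonempty}, ⨆ p ∈ O, f p

/-- A semitopology is 3-twined when any three nonempty open sets have
nonempty intersection. -/
def ThreeTwined (S : Semitopology P) : Prop :=
  ∀ O₁ O₂ O₃ : Set P, O₁ ∈ S.opens → O₂ ∈ S.opens → O₃ ∈ S.opens →
    O₁.Nonempty → O₂.Nonempty → O₃.Nonempty → (O₁ ∩ O₂ ∩ O₃).Nonempty

end Semitopology

open Semitopology


lemma tB_le_of_F_lt {x : TV} (h : tF < x) : tB ≤ x := by
  have := Fin.lt_def.mp h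
  exact Fin.le_def.mpr (by have h0 : (0:ℕ) < x.val := this; show 1 ≤ x.val; omega)

lemma tB_le_iSup_iff {ι : Sort*} (f : ι → TV) : tB ≤ ⨆ i, f i ↔ ∃ i, tB ≤ f i := by
  constructor
  · intro h
    have hlt : (tF : TV) < ⨆ i, f i := lt_of_lt_of_le (by decide) h
    obtain ⟨i, hi⟩ := lt_iSup_iff.mp hlt
    exact ⟨i, tB_le_of_F_lt hi⟩
  · rintro ⟨i, hi⟩
    exact le_trans hi (le_iSup f i)

lemma tB_le_quorum {P : Type*} (S : Semitopology P) (f : P → TV)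
    (h : tB ≤ S.Quorum f) : ∃ O ∈ S.opens, O.Nonempty ∧ ∀ q ∈ O, tB ≤ f q := by
  unfold Semitopology.Quorum at h
  obtain ⟨O, hO⟩ := (tB_le_iSup_iff _).mp h
  obtain ⟨hOmem, hO⟩ := (tB_le_iSup_iff _).mp hO
  exact ⟨O, hOmem.1, hOmem.2, fun q hq =>
    le_trans hO (le_trans (iInf_le _ q) (iInf_le _ hq))⟩

lemma eq_tT_of_tB_le_of_ne {x : TV} (h1 : tB ≤ x) (h2 : x ≠ tB) : x = tT := by
  have := Fin.le_def.mp h1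
  have hx3 := x.isLt
  have h3 : x.val ≠ 1 := fun hv => h2 (Fin.ext (by simpa [tB] using hv))
  have : x.val = 2 := by simp [tB] at this; omega
  exact Fin.ext (by simpa [tT] using this)

theorem bracha_integrity {P Val : Type*} [Nonempty Val] (S : Semitopology P)
    (broadcast echo ready deliver : P → Val → TV)
    (h3t : S.ThreeTwined)
    (hDeliverQ : ∀ p v, deliver p v = tT → tB ≤ S.Quorum (fun q => ready q v))
    (hReadyQ : ∀ p v, ready p v = tT → tB ≤ S.Quorum (fun q => echo q v))
    (hEchoQ : ∀ p v, echo p v = tT → tB ≤ Someone (fun q => broadcast q v))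
    (hDeliverB : ∀ p v, S.Quorum (fun q => ready q v) = tT → tB ≤ deliver p v)
    (hReadyB : ∀ p v, S.Quorum (fun q => echo q v) = tT → tB ≤ ready p v)
    (hEchoB : ∀ p v, Someone (fun q => broadcast q v) = tT → tB ≤ ⨆ v'' : Val, echo p v'')
    (hReadyBB : ∀ p v, S.Contraquorum (fun q => ready q v) = tT → tB ≤ ready p v)
    (hEcho01 : ∀ p (v v' : Val), echo p v = tT → echo p v' = tT → v = v')
    (hBroadcast1a : ∃ v'' : Val, tB ≤ Someone (fun q => broadcast q v''))
    (hBroadcast1b : ∀ v v' : Val, Someone (fun q => broadcast q v) = tT →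
        Someone (fun q => broadcast q v') = tT → v = v')
    (hCorrectReady : ∃ O ∈ S.opens, O.Nonempty ∧ ∀ q ∈ O, ∀ v'' : Val, ready q v'' ≠ tB)
    (hCorrectEcho : ∃ O ∈ S.opens, O.Nonempty ∧ ∀ q ∈ O, ∀ v'' : Val, echo q v'' ≠ tB)
    (hCorrectReady' : ∀ p, (∀ v'' : Val, ready p v'' ≠ tB) ∨ (∀ v'' : Val, ready p v'' = tB))
    (hCorrectEcho' : ∀ p, (∀ v'' : Val, echo p v'' ≠ tB) ∨ (∀ v'' : Val, echo p v'' = tB))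
    (hCorrectBroadcast : (∀ (q : P) (v'' : Val), broadcast q v'' ≠ tB) ∨
        (∀ (q : P) (v'' : Val), broadcast q v'' = tB)) :
    ∀ (p : P) (v : Val), deliver p v = tT → tB ≤ Someone (fun q => broadcast q v) := by
  intro p v hdel
  obtain ⟨Or, hOrO, hOrNe, hOr⟩ := tB_le_quorum S _ (hDeliverQ p v hdel)
  obtain ⟨Ocr, hOcrO, hOcrNe, hOcr⟩ := hCorrectReady
  obtain ⟨q, hq⟩ := h3t Or Ocr Ocr hOrO hOcrO hOcrO hOrNe hOcrNe hOcrNe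
  have hreadyT : ready q v = tT :=
    eq_tT_of_tB_le_of_ne (hOr q hq.1.1) (hOcr q hq.1.2 v)
  obtain ⟨Oe, hOeO, hOeNe, hOe⟩ := tB_le_quorum S _ (hReadyQ q v hreadyT)
  obtain ⟨Oce, hOceO, hOceNe, hOce⟩ := hCorrectEcho
  obtain ⟨q', hq'⟩ := h3t Oe Oce Oce hOeO hOceO hOceO hOeNe hOceNe hOceNe
  have hechoT : echo q' v = tT :=
    eq_tT_of_tB_le_of_ne (hOe q' hq'.1.1) (hOce q' hq'.1.2 v)
  exact hEchoQ q' v hechoT
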